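/- Let p be an odd prime, (V,⟨·,·⟩) a nondegenerate symplectic 𝔽_p-vector space of dimension 2n, and V^♯ = V × 𝔽_p the associated Heisenberg group. Every irreducible complex representation of V^♯ whose restriction to the center {0} × 𝔽_p is given by a nontrivial character has dimension pⁿ, and two such irreducible representations with the same central character are isomorphic. -/

import Mathlib

/-- The Heisenberg multiplication on `V × 𝔽_p`:
`(v,a)·(v',a') = (v+v', a+a'+(1/2)⟨v,v'⟩)`. -/
def heisMul {p : ℕ} {V : Type*} [AddCommGroup V] [Module (ZMod p) V]
    (f : V →ₗ[ZMod p] V →ₗ[ZMod p] ZMod p) (x y : V × ZMod p) : V × ZMod p :=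
  (x.1 + y.1, x.2 + y.2 + (2 : ZMod p)⁻¹ * f x.1 y.1)

open Module Submodule

theorem heis_aux {p : ℕ} [Fact p.Prime]
    {V : Type*} [AddCommGroup V] [Module (ZMod p) V]
    (f : V →ₗ[ZMod p] V →ₗ[ZMod p] ZMod p)
    (halt : ∀ v : V, f v v = 0)
    (hnd : ∀ v : V, v ≠ 0 → ∃ w : V, f v w ≠ 0)
    (hp2 : (2 : ZMod p) ≠ 0)
    (ψ : ZMod p → ℂ) (hψ0 : ψ 0 = 1)
    (hψadd : ∀ a b : ZMod p, ψ (a + b) = ψ a * ψ b)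
    (hψne1 : ∀ c : ZMod p, c ≠ 0 → ψ c ≠ 1)
    (L M : Submodule (ZMod p) V) [Fintype L] [Fintype M]
    (hLM : IsCompl M L)
    (hLiso : ∀ x ∈ L, ∀ y ∈ L, f x y = 0)
    (hsep : ∀ v ∈ M, v ≠ 0 → ∃ ℓ ∈ L, f ℓ v ≠ 0)
    {W : Type*} [AddCommGroup W] [Module ℂ W] [FiniteDimensional ℂ W] [Nontrivial W]
    (ρ : V × ZMod p → (W →ₗ[ℂ] W))
    (hρone : ρ ((0 : V), (0 : ZMod p)) = LinearMap.id)
    (hρmul : ∀ x y : V × ZMod p, ρ (heisMul f x y) = ρ x ∘ₗ ρ y)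
    (hρirr : ∀ U : Submodule ℂ W, (∀ x : V × ZMod p, ∀ w ∈ U, ρ x w ∈ U) → U = ⊥ ∨ U = ⊤)
    (hρcent : ∀ a : ZMod p, ρ ((0 : V), a) = ψ a • LinearMap.id) :
    ∃ b : Basis M ℂ W, ∀ (v : V) (c : ZMod p) (m : M),
      ρ (v, c) (b m) =
        ψ (c + (2:ZMod p)⁻¹ * f v m
            - (2:ZMod p)⁻¹ * f (M.linearProjOfIsCompl L hLM (v + m))
                (v + m - M.linearProjOfIsCompl L hLM (v + m)))
          • b (M.linearProjOfIsCompl L hLM (v + m)) := by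
  classical
  have hψne0 : ∀ a : ZMod p, ψ a ≠ 0 := by
    intro a h
    have h2 := hψadd a (-a)
    rw [add_neg_cancel, hψ0, h, zero_mul] at h2
    exact one_ne_zero h2
  have hskew : ∀ x y : V, f x y = - f y x := by
    intro x y
    have h := halt (x + y)
    simp only [map_add, LinearMap.add_apply, halt] at h
    linear_combination h
  have hhalf : (2 : ZMod p)⁻¹ + (2 : ZMod p)⁻¹ = 1 := by
    rw [← two_mul, mul_inv_cancel₀ hp2]
  -- splitting off the central coordinate
  have hsplit : ∀ (v : V) (c : ZMod p), ρ (v, c) = ψ c • ρ (v, 0) := by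
    intro v c
    have h := hρmul ((0 : V), c) (v, (0 : ZMod p))
    have he : heisMul f ((0 : V), c) (v, (0 : ZMod p)) = (v, c) := by
      simp [heisMul]
    rw [he, hρcent] at h
    rw [h, LinearMap.smul_comp, LinearMap.id_comp]
  have hcomp : ∀ u v : V, ρ (u, (0:ZMod p)) ∘ₗ ρ (v, (0:ZMod p))
      = ρ (u + v, (2:ZMod p)⁻¹ * f u v) := by
    intro u v
    rw [← hρmul]
    congr 1
    simp [heisMul]
  -- vanishing of traces
  have htr0 : ∀ ℓ : V, ℓ ≠ 0 → LinearMap.trace ℂ W (ρ (ℓ, 0)) = 0 := by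
    intro ℓ hℓ
    obtain ⟨u, hu⟩ := hnd ℓ hℓ
    have hc : f u ℓ ≠ 0 := by
      rw [hskew u ℓ]
      simpa using hu
    have h1 : ρ (u, (0:ZMod p)) ∘ₗ ρ (ℓ - u, (0:ZMod p))
        = ψ ((2:ZMod p)⁻¹ * f u ℓ) • ρ (ℓ, (0:ZMod p)) := by
      rw [hcomp]
      have : u + (ℓ - u) = ℓ := by abel
      rw [show (2:ZMod p)⁻¹ * f u (ℓ - u) = (2:ZMod p)⁻¹ * f u ℓ by
        rw [map_sub, halt]; ring, this, hsplit]
    have h2 : ρ (ℓ - u, (0:ZMod p)) ∘ₗ ρ (u, (0:ZMod p))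
        = ψ (-((2:ZMod p)⁻¹ * f u ℓ)) • ρ (ℓ, (0:ZMod p)) := by
      rw [hcomp]
      have hv : ℓ - u + u = ℓ := by abel
      rw [show (2:ZMod p)⁻¹ * f (ℓ - u) u = -((2:ZMod p)⁻¹ * f u ℓ) by
        rw [map_sub, LinearMap.sub_apply, halt, hskew ℓ u]; ring, hv, hsplit]
    have h3 := LinearMap.trace_mul_comm ℂ (ρ (u, (0:ZMod p))) (ρ (ℓ - u, (0:ZMod p)))
    rw [Module.End.mul_eq_comp, Module.End.mul_eq_comp, h1, h2, map_smul, map_smul] at h3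
    by_contra ht
    have h4 : ψ ((2:ZMod p)⁻¹ * f u ℓ) = ψ (-((2:ZMod p)⁻¹ * f u ℓ)) :=
      mul_right_cancel₀ ht (by simpa [smul_eq_mul] using h3)
    have hadd : (1:ℂ) = ψ ((2:ZMod p)⁻¹ * f u ℓ) * ψ (-((2:ZMod p)⁻¹ * f u ℓ)) := by
      rw [← hψadd, add_neg_cancel, hψ0]
    have h5 : ψ (f u ℓ) = 1 := by
      calc ψ (f u ℓ) = ψ ((2:ZMod p)⁻¹ * f u ℓ + (2:ZMod p)⁻¹ * f u ℓ) := by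
            rw [← add_mul, hhalf, one_mul]
        _ = ψ ((2:ZMod p)⁻¹ * f u ℓ) * ψ ((2:ZMod p)⁻¹ * f u ℓ) := hψadd _ _
        _ = ψ ((2:ZMod p)⁻¹ * f u ℓ) * ψ (-((2:ZMod p)⁻¹ * f u ℓ)) := by rw [← h4]
        _ = 1 := hadd.symm
    exact hψne1 _ hc h5
  -- the averaging projector over L
  set P : W →ₗ[ℂ] W := ∑ ℓ : L, ρ ((ℓ : V), 0) with hP
  have hPfix : ∀ ℓ₀ ∈ L, ρ (ℓ₀, (0:ZMod p)) ∘ₗ P = P := by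
    intro ℓ₀ hℓ₀
    ext w
    simp only [LinearMap.comp_apply, hP, LinearMap.sum_apply, map_sum]
    refine Fintype.sum_equiv (Equiv.addLeft (⟨ℓ₀, hℓ₀⟩ : L)) _ _ fun ℓ => ?_
    rw [← LinearMap.comp_apply, hcomp]
    have : (2:ZMod p)⁻¹ * f ℓ₀ ℓ = 0 := by rw [hLiso _ hℓ₀ _ ℓ.2, mul_zero]
    rw [this]
    simp
  have hPtr : LinearMap.trace ℂ W P = (finrank ℂ W : ℂ) := by
    rw [hP, map_sum, Finset.sum_eq_single (0 : L)]
    · rw [ZeroMemClass.coe_zero, hρone, LinearMap.trace_id]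
    · intro ℓ _ hℓ
      exact htr0 ℓ (fun h => hℓ (Subtype.ext h))
    · simp
  have hPne : P ≠ 0 := by
    intro h
    rw [h, map_zero] at hPtr
    have : (finrank ℂ W : ℂ) ≠ 0 := by
      exact_mod_cast Nat.cast_ne_zero.2 (Module.finrank_pos (R := ℂ) (M := W)).ne'
    exact this hPtr.symm
  obtain ⟨u₀, hu₀⟩ : ∃ u₀, P u₀ ≠ 0 := by
    by_contra h
    push_neg at h
    exact hPne (LinearMap.ext fun u => h u)
  set w₀ : W := P u₀ with hw₀def
  have hw₀ : ∀ ℓ ∈ L, ρ (ℓ, (0:ZMod p)) w₀ = w₀ := by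
    intro ℓ hℓ
    rw [hw₀def, show ρ (ℓ, (0:ZMod p)) (P u₀) = (ρ (ℓ, (0:ZMod p)) ∘ₗ P) u₀ from rfl,
      hPfix ℓ hℓ]
  set πM : V →ₗ[ZMod p] M := M.linearProjOfIsCompl L hLM with hπM
  have hπmem : ∀ x : V, x - πM x ∈ L := by
    intro x
    have h := Submodule.projection_add_projection_eq_self hLM x
    have h2 : x - (πM x : V) = (L.linearProjOfIsCompl M hLM.symm x : V) :=
      sub_eq_iff_eq_add'.2 h.symm
    rw [h2]
    exact (L.linearProjOfIsCompl M hLM.symm x).2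
  have key : ∀ (v : V) (c : ZMod p) (m : M),
      ρ (v, c) (ρ ((m : V), 0) w₀) =
        ψ (c + (2:ZMod p)⁻¹ * f v m
            - (2:ZMod p)⁻¹ * f (πM (v + m)) (v + m - πM (v + m)))
          • ρ ((πM (v + m) : V), 0) w₀ := by
    intro v c m
    have hstep : ρ (v, c) ∘ₗ ρ ((m:V), 0) = ρ (v + m, c + (2:ZMod p)⁻¹ * f v m) := by
      rw [← hρmul]; congr 1; simp [heisMul]
    set a : ZMod p := c + (2:ZMod p)⁻¹ * f v m
      - (2:ZMod p)⁻¹ * f (πM (v + (m:V))) (v + (m:V) - πM (v + (m:V))) with ha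
    have hdec : heisMul f ((πM (v + (m:V)) : V), 0)
        (heisMul f (v + (m:V) - (πM (v + (m:V)) : V), 0) ((0:V), a))
        = (v + (m:V), c + (2:ZMod p)⁻¹ * f v m) := by
      simp only [heisMul, add_zero, zero_add, map_zero, mul_zero]
      rw [Prod.mk.injEq]
      constructor
      · abel
      · rw [ha]; ring
    calc ρ (v, c) (ρ ((m:V), 0) w₀)
        = ρ (v + (m:V), c + (2:ZMod p)⁻¹ * f v m) w₀ := by
          rw [← LinearMap.comp_apply, hstep]
      _ = (ρ ((πM (v + (m:V)) : V), 0) ∘ₗ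
            (ρ (v + (m:V) - (πM (v + (m:V)) : V), 0) ∘ₗ ρ ((0:V), a))) w₀ := by
          rw [← hρmul, ← hρmul, hdec]
      _ = ψ a • ρ ((πM (v + (m:V)) : V), 0) w₀ := by
          rw [LinearMap.comp_apply, LinearMap.comp_apply, hρcent]
          simp only [LinearMap.smul_apply, LinearMap.id_apply, map_smul]
          rw [hw₀ _ (hπmem (v + (m:V)))]
  have heigen : ∀ (ℓ : L) (m : M),
      ρ ((ℓ:V), 0) (ρ ((m:V), 0) w₀) = ψ (f ℓ m) • ρ ((m:V), 0) w₀ := by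
    intro ℓ m
    have hproj : πM ((ℓ:V) + (m:V)) = m := by
      rw [map_add, hπM, Submodule.linearProjOfIsCompl, Submodule.projectionOnto_apply_of_mem_right hLM ℓ.2,
        Submodule.linearProjOfIsCompl_apply_left hLM m, zero_add]
    have h := key (ℓ:V) 0 m
    rw [hproj] at h
    rw [h]
    congr 2
    have h1 : (ℓ:V) + (m:V) - (m:V) = (ℓ:V) := by abel
    rw [h1, hskew (m:V) (ℓ:V)]
    linear_combination (f (ℓ:V) (m:V)) * hhalf
  -- character sum over L vanishes when the functional is nontrivial
  have hcs : ∀ v : V, (∃ ℓ₀ ∈ L, f ℓ₀ v ≠ 0) → (∑ ℓ : L, ψ (f ℓ v)) = 0 := by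
    rintro v ⟨ℓ₀, hℓ₀, hc⟩
    have h1 : (∑ ℓ : L, ψ (f ((⟨ℓ₀, hℓ₀⟩ : L) + ℓ : L) v)) = ∑ ℓ : L, ψ (f ℓ v) :=
      Fintype.sum_equiv (Equiv.addLeft (⟨ℓ₀, hℓ₀⟩ : L)) _ _ fun ℓ => rfl
    have h2 : (∑ ℓ : L, ψ (f ((⟨ℓ₀, hℓ₀⟩ : L) + ℓ : L) v))
        = ψ (f ℓ₀ v) * ∑ ℓ : L, ψ (f ℓ v) := by
      rw [Finset.mul_sum]
      refine Finset.sum_congr rfl fun ℓ _ => ?_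
      rw [Submodule.coe_add, map_add, LinearMap.add_apply, hψadd]
    have h3 : (ψ (f ℓ₀ v) - 1) * ∑ ℓ : L, ψ (f ℓ v) = 0 := by
      rw [sub_mul, one_mul, ← h2, h1, sub_self]
    rcases mul_eq_zero.1 h3 with h | h
    · exact absurd (by linear_combination h) (hψne1 _ hc)
    · exact h
  -- nonvanishing of translates
  have hinj : ∀ (v : V) (w : W), ρ (v, (0:ZMod p)) w = 0 → w = 0 := by
    intro v w h
    have h1 : ρ (-v, (0:ZMod p)) ∘ₗ ρ (v, (0:ZMod p)) = LinearMap.id := by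
      rw [hcomp]
      have : f (-v) v = 0 := by rw [map_neg, LinearMap.neg_apply, halt, neg_zero]
      rw [this, mul_zero, neg_add_cancel, hρone]
    calc w = (ρ (-v, (0:ZMod p)) ∘ₗ ρ (v, (0:ZMod p))) w := by rw [h1]; rfl
      _ = ρ (-v, (0:ZMod p)) 0 := by rw [LinearMap.comp_apply, h]
      _ = 0 := map_zero _
  have hune : ∀ m : M, ρ ((m:V), (0:ZMod p)) w₀ ≠ 0 := fun m h => hu₀ (hinj _ _ h)
  -- linear independence
  have hli : LinearIndependent ℂ (fun m : M => ρ ((m:V), (0:ZMod p)) w₀) := by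
    rw [Fintype.linearIndependent_iff]
    intro g hg m₀
    have h0 : (∑ ℓ : L, ψ (-(f ℓ m₀)) •
        ρ ((ℓ:V), (0:ZMod p)) (∑ m : M, g m • ρ ((m:V), (0:ZMod p)) w₀)) = 0 := by
      rw [hg]; simp
    have h1 : ∀ ℓ : L, ρ ((ℓ:V), (0:ZMod p)) (∑ m : M, g m • ρ ((m:V), (0:ZMod p)) w₀)
        = ∑ m : M, g m • (ψ (f ℓ m) • ρ ((m:V), (0:ZMod p)) w₀) := by
      intro ℓ
      rw [map_sum]
      exact Finset.sum_congr rfl fun m _ => by rw [map_smul, heigen]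
    rw [Finset.sum_congr rfl fun ℓ _ => by rw [h1]] at h0
    have h2 : (∑ m : M, (g m * ∑ ℓ : L, ψ (-(f ℓ m₀)) * ψ (f ℓ m)) •
        ρ ((m:V), (0:ZMod p)) w₀) = 0 := by
      have hswap : (∑ ℓ : L, ψ (-(f ℓ m₀)) • ∑ m : M, g m • ψ (f ℓ m) • ρ ((m:V), (0:ZMod p)) w₀)
          = ∑ m : M, ∑ ℓ : L, ψ (-(f ℓ m₀)) • (g m • ψ (f ℓ m) • ρ ((m:V), (0:ZMod p)) w₀) := by
        simp_rw [Finset.smul_sum]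
        exact Finset.sum_comm
      rw [← h0, hswap]
      refine Finset.sum_congr rfl fun m _ => ?_
      rw [Finset.mul_sum, Finset.sum_smul]
      refine Finset.sum_congr rfl fun ℓ _ => ?_
      simp only [smul_smul]
      congr 1
      ring
    rw [Finset.sum_eq_single m₀ (fun m _ hm => ?_) (by simp)] at h2
    · have hcard : (∑ ℓ : L, ψ (-(f ℓ m₀)) * ψ (f ℓ m₀)) = (Fintype.card L : ℂ) := by
        rw [Finset.sum_congr rfl fun ℓ _ => by
          rw [← hψadd, neg_add_cancel, hψ0]]
        simp
      rw [hcard] at h2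
      rcases smul_eq_zero.1 h2 with h | h
      · rcases mul_eq_zero.1 h with h | h
        · exact h
        · exact absurd h (Nat.cast_ne_zero.2 Fintype.card_ne_zero)
      · exact absurd h (hune m₀)
    · -- m ≠ m₀ : the inner character sum vanishes
      have hsum : (∑ ℓ : L, ψ (-(f ℓ m₀)) * ψ (f ℓ m)) = 0 := by
        have he : ∀ ℓ : L, ψ (-(f ℓ m₀)) * ψ (f ℓ m) = ψ (f ℓ ((m:V) - (m₀:V))) := by
          intro ℓ
          rw [← hψadd, map_sub]
          congr 1
          ring
        rw [Finset.sum_congr rfl fun ℓ _ => he ℓ]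
        refine hcs _ ?_
        have hmem : (m:V) - (m₀:V) ∈ M := sub_mem m.2 m₀.2
        have hne : (m:V) - (m₀:V) ≠ 0 := sub_ne_zero.2 fun h => hm (Subtype.ext h)
        exact hsep _ hmem hne
      rw [hsum, mul_zero, zero_smul]
  -- spanning
  have hspan : Submodule.span ℂ (Set.range fun m : M => ρ ((m:V), (0:ZMod p)) w₀) = ⊤ := by
    set U := Submodule.span ℂ (Set.range fun m : M => ρ ((m:V), (0:ZMod p)) w₀) with hU
    have hinv : ∀ (x : V × ZMod p), ∀ w ∈ U, ρ x w ∈ U := by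
      intro x w hw
      have hle : U ≤ U.comap (ρ x) := by
        rw [hU, Submodule.span_le]
        rintro _ ⟨m, rfl⟩
        rw [SetLike.mem_coe, Submodule.mem_comap]
        obtain ⟨v, c⟩ := x
        rw [key v c m]
        exact Submodule.smul_mem _ _ (Submodule.subset_span ⟨_, rfl⟩)
      exact hle hw
    rcases hρirr U hinv with h | h
    · exfalso
      have hmem : ρ (((0:M):V), (0:ZMod p)) w₀ ∈ U :=
        Submodule.subset_span ⟨0, rfl⟩
      rw [h] at hmem
      apply hune 0
      simpa using hmem
    · exact h
  -- assemble the basis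
  refine ⟨Basis.mk hli (by rw [hspan]), fun v c m => ?_⟩
  rw [Basis.mk_apply, Basis.mk_apply]
  exact key v c m

/-- Stone–von Neumann: let `(V,⟨·,·⟩)` be a nondegenerate symplectic
`𝔽_p`-vector space of dimension `2n`, `p` odd. Every irreducible complex representation
of the Heisenberg group `V^♯` whose restriction to the center `{0} × 𝔽_p` is a
nontrivial character has dimension `pⁿ`, and two such with the same central character
are isomorphic. -/
theorem stone_von_neumann (p : ℕ) [Fact p.Prime] (hodd : p ≠ 2) (n : ℕ)
    (V : Type*) [AddCommGroup V] [Module (ZMod p) V] [FiniteDimensional (ZMod p) V]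
    (f : V →ₗ[ZMod p] V →ₗ[ZMod p] ZMod p)
    (halt : ∀ v : V, f v v = 0)
    (hnd : ∀ v : V, v ≠ 0 → ∃ w : V, f v w ≠ 0)
    (hdim : Module.finrank (ZMod p) V = 2 * n)
    -- a representation `ρ` of `V^♯` on `W`:
    (W : Type*) [AddCommGroup W] [Module ℂ W] [FiniteDimensional ℂ W] [Nontrivial W]
    (ρ : V × ZMod p → (W →ₗ[ℂ] W))
    (hρone : ρ ((0 : V), (0 : ZMod p)) = LinearMap.id)
    (hρmul : ∀ x y : V × ZMod p, ρ (heisMul f x y) = ρ x ∘ₗ ρ y)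
    -- `ρ` is irreducible:
    (hρirr : ∀ U : Submodule ℂ W, (∀ x : V × ZMod p, ∀ w ∈ U, ρ x w ∈ U) → U = ⊥ ∨ U = ⊤)
    -- the center acts by a nontrivial character `ψ`:
    (ψ : ZMod p → ℂ)
    (hρcent : ∀ a : ZMod p, ρ ((0 : V), a) = ψ a • LinearMap.id)
    (hψnt : ∃ a : ZMod p, ψ a ≠ 1)
    -- a second representation `ρ'` of `V^♯` on `W'` with the same properties and the
    -- same central character `ψ`:
    (W' : Type*) [AddCommGroup W'] [Module ℂ W'] [FiniteDimensional ℂ W'] [Nontrivial W']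
    (ρ' : V × ZMod p → (W' →ₗ[ℂ] W'))
    (hρ'one : ρ' ((0 : V), (0 : ZMod p)) = LinearMap.id)
    (hρ'mul : ∀ x y : V × ZMod p, ρ' (heisMul f x y) = ρ' x ∘ₗ ρ' y)
    (hρ'irr : ∀ U : Submodule ℂ W', (∀ x : V × ZMod p, ∀ w ∈ U, ρ' x w ∈ U) → U = ⊥ ∨ U = ⊤)
    (hρ'cent : ∀ a : ZMod p, ρ' ((0 : V), a) = ψ a • LinearMap.id) :
    Module.finrank ℂ W = p ^ n ∧
    ∃ T : W ≃ₗ[ℂ] W', ∀ (x : V × ZMod p) (w : W), T (ρ x w) = ρ' x (T w) := by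
    classical
  have hp := (Fact.out : p.Prime)
  -- 2 is invertible mod p
  have hp2 : (2 : ZMod p) ≠ 0 := by
    intro h
    have h2 : ((2 : ℕ) : ZMod p) = 0 := by exact_mod_cast h
    rw [ZMod.natCast_eq_zero_iff] at h2
    exact hodd ((Nat.prime_dvd_prime_iff_eq hp Nat.prime_two).1 h2)
  have hskew : ∀ x y : V, f x y = - f y x := by
    intro x y
    have h := halt (x + y)
    simp only [map_add, LinearMap.add_apply, halt] at h
    linear_combination h
  -- properties of ψ
  obtain ⟨w1, hw1⟩ := exists_ne (0 : W)
  have hsmul_inj : ∀ (a b : ℂ), a • w1 = b • w1 → a = b := by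
    intro a b h
    by_contra hne
    have : (a - b) • w1 = 0 := by rw [sub_smul, h, sub_self]
    rcases smul_eq_zero.1 this with h' | h'
    · exact hne (sub_eq_zero.1 h')
    · exact hw1 h'
  have hψ0 : ψ 0 = 1 := by
    have h := hρcent 0
    rw [hρone] at h
    have := congrArg (fun g : W →ₗ[ℂ] W => g w1) h
    simp only [LinearMap.id_apply, LinearMap.smul_apply] at this
    have h2 : (1:ℂ) • w1 = ψ 0 • w1 := by rw [one_smul]; exact this
    exact (hsmul_inj _ _ h2).symm
  have hψadd : ∀ a b : ZMod p, ψ (a + b) = ψ a * ψ b := by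
    intro a b
    have h := hρmul ((0 : V), a) ((0 : V), b)
    have he : heisMul f ((0 : V), a) ((0 : V), b) = ((0 : V), a + b) := by
      simp [heisMul]
    rw [he, hρcent, hρcent, hρcent] at h
    have := congrArg (fun g : W →ₗ[ℂ] W => g w1) h
    simp only [LinearMap.smul_apply, LinearMap.id_apply, LinearMap.comp_apply,
      smul_smul] at this
    exact hsmul_inj _ _ this
  have hψne1 : ∀ c : ZMod p, c ≠ 0 → ψ c ≠ 1 := by
    intro c hc h1
    obtain ⟨a, ha⟩ := hψnt
    have hpow : ∀ k : ℕ, ψ ((k : ZMod p) * c) = 1 := by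
      intro k
      induction k with
      | zero => simpa using hψ0
      | succ k ih =>
        push_cast
        rw [add_mul, one_mul, hψadd, ih, h1, one_mul]
    have : ψ a = 1 := by
      have hk : (((a * c⁻¹).val : ℕ) : ZMod p) * c = a := by
        rw [ZMod.natCast_val, ZMod.cast_id]
        field_simp
      rw [← hk]
      exact hpow _
    exact ha this
  -- construct a maximal isotropic subspace L
  have hbot : ∀ x ∈ (⊥ : Submodule (ZMod p) V), ∀ y ∈ (⊥ : Submodule (ZMod p) V), f x y = 0 := by
    intro x hx y hy
    rw [Submodule.mem_bot] at hx
    rw [hx]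
    simp
  set P : ℕ → Prop := fun d => ∃ L : Submodule (ZMod p) V,
    (∀ x ∈ L, ∀ y ∈ L, f x y = 0) ∧ Module.finrank (ZMod p) L = d with hPdef
  have h0 : P 0 := ⟨⊥, hbot, finrank_bot _ _⟩
  have hD : P (Nat.findGreatest P (Module.finrank (ZMod p) V)) :=
    Nat.findGreatest_spec (Nat.zero_le _) h0
  obtain ⟨L, hLiso, hLrk⟩ := hD
  have hmax : ∀ L' : Submodule (ZMod p) V, (∀ x ∈ L', ∀ y ∈ L', f x y = 0) →
      Module.finrank (ZMod p) L' ≤ Module.finrank (ZMod p) L := by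
    intro L' h
    rw [hLrk]
    exact Nat.le_findGreatest (Submodule.finrank_le L') ⟨L', h, rfl⟩
  -- maximality gives L^⊥ ≤ L
  have horth : ∀ v : V, (∀ ℓ ∈ L, f ℓ v = 0) → v ∈ L := by
    intro v hv
    by_contra hvL
    have hiso' : ∀ x ∈ L ⊔ Submodule.span (ZMod p) {v},
        ∀ y ∈ L ⊔ Submodule.span (ZMod p) {v}, f x y = 0 := by
      intro x hx y hy
      rw [Submodule.mem_sup] at hx hy
      obtain ⟨a, ha, x', hx', rfl⟩ := hx
      obtain ⟨b, hb, y', hy', rfl⟩ := hy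
      obtain ⟨cx, rfl⟩ := Submodule.mem_span_singleton.1 hx'
      obtain ⟨cy, rfl⟩ := Submodule.mem_span_singleton.1 hy'
      have h1 := hLiso a ha b hb
      have h2 := hv a ha
      have h3 := hv b hb
      have h4 : f v a = 0 := by rw [hskew]; rw [h2]; ring
      have h5 : f v b = 0 := by rw [hskew]; rw [h3]; ring
      simp only [map_add, map_smul, LinearMap.add_apply, LinearMap.smul_apply,
        smul_eq_mul]
      rw [h1, h2, h5, halt]
      ring
    have hvmem : v ∈ L ⊔ Submodule.span (ZMod p) {v} :=
      Submodule.mem_sup_right (Submodule.mem_span_singleton_self v)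
    have hlt : L < L ⊔ Submodule.span (ZMod p) {v} :=
      lt_of_le_of_ne le_sup_left (fun h => hvL (h ▸ hvmem))
    have h6 := Submodule.finrank_lt_finrank_of_lt hlt
    have h7 := hmax _ hiso'
    omega
  -- L is Lagrangian of dimension n
  have hrefl : LinearMap.BilinForm.IsRefl f := by
    intro x y h
    rw [hskew y x, h, neg_zero]
  have hndB : LinearMap.BilinForm.Nondegenerate f := by
    refine ⟨fun v hv => ?_, fun v hv => ?_⟩
    · by_contra h
      obtain ⟨w, hw⟩ := hnd v h
      exact hw (hv w)
    · by_contra h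
      obtain ⟨w, hw⟩ := hnd v h
      exact hw (by rw [hskew, hv w, neg_zero])
  have horthL : LinearMap.BilinForm.orthogonal f L = L := by
    ext v
    constructor
    · intro hv
      exact horth v (fun ℓ hℓ => hv ℓ hℓ)
    · intro hv ℓ hℓ
      exact hLiso ℓ hℓ v hv
  have hfr := LinearMap.BilinForm.finrank_orthogonal hndB L
  rw [horthL] at hfr
  have hLle := Submodule.finrank_le L
  have hLn : Module.finrank (ZMod p) L = n := by omega
  -- complement M
  obtain ⟨M, hMc⟩ := Submodule.exists_isCompl L
  have hLM : IsCompl M L := hMc.symm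
  have hMn : Module.finrank (ZMod p) M = n := by
    have := Submodule.finrank_add_eq_of_isCompl hMc
    omega
  have hsep : ∀ v ∈ M, v ≠ 0 → ∃ ℓ ∈ L, f ℓ v ≠ 0 := by
    intro v hvM hv0
    by_contra h
    push_neg at h
    have hvL : v ∈ L := horth v h
    have : v ∈ M ⊓ L := ⟨hvM, hvL⟩
    rw [hLM.inf_eq_bot] at this
    exact hv0 this
  -- finiteness
  haveI : Finite V := Module.finite_of_finite (ZMod p)
  haveI : Fintype V := Fintype.ofFinite V
  haveI : Fintype L := Fintype.ofFinite L
  haveI : Fintype M := Fintype.ofFinite M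
  have hcardM : Fintype.card M = p ^ n := by
    rw [card_eq_pow_finrank (K := ZMod p) (V := M), hMn, ZMod.card]
  -- apply the structure theorem to both representations
  obtain ⟨b, hb⟩ := heis_aux f halt hnd hp2 ψ hψ0 hψadd hψne1 L M hLM hLiso hsep
    ρ hρone hρmul hρirr hρcent
  obtain ⟨b', hb'⟩ := heis_aux f halt hnd hp2 ψ hψ0 hψadd hψne1 L M hLM hLiso hsep
    ρ' hρ'one hρ'mul hρ'irr hρ'cent
  constructor
  · rw [Module.finrank_eq_card_basis b, hcardM]
  · refine ⟨b.equiv b' (Equiv.refl M), ?_⟩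
    rintro ⟨v, c⟩ w
    have heq : (b.equiv b' (Equiv.refl M)).toLinearMap ∘ₗ ρ (v, c)
        = ρ' (v, c) ∘ₗ (b.equiv b' (Equiv.refl M)).toLinearMap := by
      apply b.ext
      intro m
      simp only [LinearMap.comp_apply, LinearEquiv.coe_coe]
      rw [hb v c m, map_smul, Basis.equiv_apply, Basis.equiv_apply, Equiv.refl_apply,
        Equiv.refl_apply, hb' v c m]
    exact LinearMap.congr_fun heq w
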